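/- Extension of the discrete Gaussian tail bound to real thresholds: For all reals x ≥ 1 and σ > 0, if X is distributed according to the discrete Gaussian N_ℤ(σ²) and Z is distributed according to the centered real Gaussian measure N(0, σ²), then Pr[X > x] ≤ Pr[Z > ⌊x⌋], where ⌊x⌋ denotes the floor of x. -/

import Mathlib

open scoped ENNReal
open ProbabilityTheory

/-- The discrete Gaussian mass function `N_ℤ(v)` (real-valued) with variance
parameter `v = σ²`. -/
noncomputable def discreteGaussianPMF (v : ℝ) (x : ℤ) : ℝ :=
  Real.exp (-(x : ℝ) ^ 2 / (2 * v)) / ∑' y : ℤ, Real.exp (-(y : ℝ) ^ 2 / (2 * v))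

open MeasureTheory Real Set in
lemma summable_dg {b : ℝ} (hb : 0 < b) :
    Summable fun n : ℤ => Real.exp (-(n : ℝ) ^ 2 / b) := by
  have key : Summable fun n : ℕ => Real.exp (-(n : ℝ) ^ 2 / b) := by
    refine Summable.of_nonneg_of_le (f := fun n : ℕ => Real.exp (-(1 / b)) ^ n)
      (fun n => (Real.exp_pos _).le) (fun n => ?_)
      (summable_geometric_of_lt_one (Real.exp_pos _).le
        (Real.exp_lt_one_iff.mpr (neg_lt_zero.mpr (by positivity))))
    · show Real.exp (-(n : ℝ) ^ 2 / b) ≤ Real.exp (-(1 / b)) ^ n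
      rw [← Real.exp_nat_mul]
      apply Real.exp_le_exp.mpr
      have h1 : (n : ℝ) ≤ (n : ℝ) ^ 2 := by exact_mod_cast Nat.le_self_pow two_ne_zero n
      rw [mul_neg, mul_one_div, neg_div, neg_le_neg_iff]
      gcongr
  apply Summable.of_nat_of_neg
  · exact key
  · simpa using key

open MeasureTheory Real Set in
lemma poisson_lower (σ : ℝ) (hσ : 0 < σ) :
    Real.sqrt (2 * π * σ ^ 2) ≤ ∑' y : ℤ, Real.exp (-(y : ℝ) ^ 2 / (2 * σ ^ 2)) := by
  have hπ := Real.pi_pos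
  set a : ℝ := (2 * π * σ ^ 2)⁻¹ with ha_def
  have ha : 0 < a := by positivity
  have heq : (fun y : ℤ => Real.exp (-(y : ℝ) ^ 2 / (2 * σ ^ 2)))
      = fun y : ℤ => Real.exp (-π * a * (y : ℝ) ^ 2) := by
    funext y
    congr 1
    rw [ha_def]
    field_simp
  rw [heq, Real.tsum_exp_neg_mul_int_sq ha]
  have h1 : (1 : ℝ) / a ^ (1 / 2 : ℝ) = Real.sqrt (2 * π * σ ^ 2) := by
    rw [← Real.sqrt_eq_rpow, one_div, ← Real.sqrt_inv, ha_def, inv_inv]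
  rw [h1]
  have hsum : Summable fun n : ℤ => Real.exp (-π / a * (n : ℝ) ^ 2) := by
    have : (fun n : ℤ => Real.exp (-π / a * (n : ℝ) ^ 2))
        = fun n : ℤ => Real.exp (-(n : ℝ) ^ 2 / (a / π)) := by
      funext n; congr 1
      rw [div_div_eq_mul_div]
      ring
    rw [this]
    exact summable_dg (by positivity)
  have hge : (1 : ℝ) ≤ ∑' n : ℤ, Real.exp (-π / a * (n : ℝ) ^ 2) := by
    have := Summable.le_tsum hsum 0 (fun j _ => (Real.exp_pos _).le)
    simpa using this
  nlinarith [Real.sqrt_nonneg (2 * π * σ ^ 2)]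

open MeasureTheory Real Set in
/-- Extension of the discrete Gaussian tail bound to real thresholds:
for real `x ≥ 1`, `Pr[X > x] ≤ Pr[Z > ⌊x⌋]` where `X ∼ N_ℤ(σ²)`, `Z ∼ N(0, σ²)`. -/
theorem discreteGaussian_tail_le_gaussian_tail_real (x : ℝ) (hx : 1 ≤ x)
    (σ : ℝ) (hσ : 0 < σ) :
    ENNReal.ofReal (∑' z : ℤ, if x < (z : ℝ) then discreteGaussianPMF (σ ^ 2) z else 0)
      ≤ gaussianReal 0 ((σ ^ 2).toNNReal) {z : ℝ | (⌊x⌋ : ℝ) < z} := by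
  have hπ := Real.pi_pos
  set v : NNReal := (σ ^ 2).toNNReal with hv_def
  have hvr : (v : ℝ) = σ ^ 2 := Real.coe_toNNReal _ (by positivity)
  have hv : v ≠ 0 := by
    intro h
    rw [h] at hvr
    simp at hvr
    nlinarith
  set S := ∑' y : ℤ, Real.exp (-(y : ℝ) ^ 2 / (2 * σ ^ 2)) with hS_def
  have hK : (0 : ℝ) < Real.sqrt (2 * π * σ ^ 2) := Real.sqrt_pos.mpr (by positivity)
  have hKS : Real.sqrt (2 * π * σ ^ 2) ≤ S := poisson_lower σ hσ
  have hS : 0 < S := lt_of_lt_of_le hK hKS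
  have hpmf : ∀ z : ℤ, discreteGaussianPMF (σ ^ 2) z
      = Real.exp (-(z : ℝ) ^ 2 / (2 * σ ^ 2)) / S := fun z => rfl
  set s : ℤ → Set ℝ := fun z => if x < (z : ℝ) then Set.Ioc ((z : ℝ) - 1) z else ∅ with hs_def
  have hmeas : ∀ z, MeasurableSet (s z) := by
    intro z
    by_cases h : x < (z : ℝ) <;> simp [hs_def, h]
  have hdisj : Pairwise (Function.onFun Disjoint s) := by
    have key : ∀ z w : ℤ, z < w → Disjoint (s z) (s w) := by
      intro z w h
      simp only [hs_def]
      split_ifs with h1 h2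
      · apply Set.disjoint_left.mpr
        intro t ht1 ht2
        have hzw : (z : ℝ) + 1 ≤ (w : ℝ) := by exact_mod_cast h
        exact absurd ht2.1 (by linarith [ht1.2])
      all_goals simp
    intro z w hzw
    rcases lt_or_gt_of_ne hzw with h | h
    · exact key z w h
    · exact (key w z h).symm
  have hterm : ∀ z : ℤ,
      ENNReal.ofReal (if x < (z : ℝ) then discreteGaussianPMF (σ ^ 2) z else 0)
        ≤ gaussianReal 0 v (s z) := by
    intro z
    by_cases h : x < (z : ℝ)
    · simp only [hs_def, h, if_true]
      have hz2 : (2 : ℝ) ≤ (z : ℝ) := by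
        have h1 : (1 : ℤ) < z := by exact_mod_cast lt_of_le_of_lt hx h
        exact_mod_cast h1
      have hpdf : discreteGaussianPMF (σ ^ 2) z ≤ gaussianPDFReal 0 v (z : ℝ) := by
        rw [hpmf]
        rw [gaussianPDFReal, hvr, sub_zero]
        rw [inv_mul_eq_div]
        gcongr
      calc ENNReal.ofReal (discreteGaussianPMF (σ ^ 2) z)
          ≤ ENNReal.ofReal (gaussianPDFReal 0 v (z : ℝ)) := ENNReal.ofReal_le_ofReal hpdf
        _ = ENNReal.ofReal (gaussianPDFReal 0 v (z : ℝ)) * volume (Set.Ioc ((z : ℝ) - 1) z) := by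
            simp [Real.volume_Ioc]
        _ = ∫⁻ t in Set.Ioc ((z : ℝ) - 1) z, ENNReal.ofReal (gaussianPDFReal 0 v (z : ℝ)) := by
            rw [setLIntegral_const]
        _ ≤ ∫⁻ t in Set.Ioc ((z : ℝ) - 1) z, gaussianPDF 0 v t := by
            apply setLIntegral_mono (measurable_gaussianPDF 0 v)
            intro t ht
            rw [gaussianPDF]
            apply ENNReal.ofReal_le_ofReal
            rw [gaussianPDFReal, gaussianPDFReal, sub_zero, sub_zero]
            gcongr (Real.sqrt (2 * π * (v : ℝ)))⁻¹ * Real.exp ?_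
            rw [neg_div, neg_div, neg_le_neg_iff]
            have h2v : (0 : ℝ) < 2 * (v : ℝ) := by rw [hvr]; positivity
            apply div_le_div_of_nonneg_right _ h2v.le
            have ht0 : (0 : ℝ) ≤ t := by
              have := ht.1
              linarith
            nlinarith [ht.1, ht.2]
        _ = gaussianReal 0 v (Set.Ioc ((z : ℝ) - 1) z) := (gaussianReal_apply 0 hv _).symm
    · simp [hs_def, h]
  have hnonneg : ∀ z : ℤ, 0 ≤ if x < (z : ℝ) then discreteGaussianPMF (σ ^ 2) z else 0 := by
    intro z
    split_ifs
    · exact div_nonneg (Real.exp_pos _).le hS.le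
    · exact le_refl 0
  have hsummable : Summable (fun z : ℤ => if x < (z : ℝ) then discreteGaussianPMF (σ ^ 2) z else 0) := by
    refine Summable.of_nonneg_of_le hnonneg (fun z => ?_)
      ((summable_dg (b := 2 * σ ^ 2) (by positivity)).div_const S)
    split_ifs
    · exact le_of_eq (hpmf z)
    · positivity
  rw [ENNReal.ofReal_tsum_of_nonneg hnonneg hsummable]
  calc ∑' z : ℤ, ENNReal.ofReal (if x < (z : ℝ) then discreteGaussianPMF (σ ^ 2) z else 0)
      ≤ ∑' z : ℤ, gaussianReal 0 v (s z) := ENNReal.tsum_le_tsum hterm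
    _ = gaussianReal 0 v (⋃ z, s z) := (measure_iUnion hdisj hmeas).symm
    _ ≤ gaussianReal 0 v {z : ℝ | (⌊x⌋ : ℝ) < z} := by
        apply measure_mono
        apply Set.iUnion_subset
        intro z
        simp only [hs_def]
        split_ifs with h
        · intro t ht
          have hfl : ⌊x⌋ < z := Int.floor_lt.mpr h
          have : (⌊x⌋ : ℝ) ≤ (z : ℝ) - 1 := by
            have : (⌊x⌋ : ℝ) + 1 ≤ (z : ℝ) := by exact_mod_cast hfl
            linarith
          exact lt_of_le_of_lt this ht.1
        · simp
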